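/- Soundness of flow-insensitive points-to analysis for copy and allocation statements: if pt is any solution of the Andersen constraints for program P, then in every execution trace of P (an arbitrary interleaving of P's statements applied to a store), the concrete value held by each variable x is an allocation site in pt(x) or the initial undefined value. -/

import Mathlib

/-- Statements of the abstract language: allocation `x := new_i()` (where
`l` is the allocation site of the `new`) and copy `x := y`. -/
inductive PtStmt (Var Loc : Type) : Type
  | new (x : Var) (l : Loc)
  | copy (x y : Var)

/-- Executing one statement on a store. -/
def ptStep {Var Loc : Type} [DecidableEq Var]
    (σ : Var → Option Loc) : PtStmt Var Loc → (Var → Option Loc)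
  | .new x l => Function.update σ x (some l)
  | .copy x y => Function.update σ x (σ y)

/-- Soundness of flow-insensitive points-to analysis for copy and allocation
statements: if `pt` satisfies the Andersen constraints for program `P`, then
after any execution trace (interleaving of statements of `P` starting from the
all-undefined store), every variable holding a concrete value `l` has
`l ∈ pt x`. -/
theorem andersen_soundness {Var Loc : Type} [DecidableEq Var]
    (P : Set (PtStmt Var Loc)) (pt : Var → Set Loc)
    (hnew : ∀ (x : Var) (l : Loc), PtStmt.new x l ∈ P → l ∈ pt x)
    (hcopy : ∀ x y : Var, PtStmt.copy x y ∈ P → pt y ⊆ pt x) :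
    ∀ tr : List (PtStmt Var Loc), (∀ st ∈ tr, st ∈ P) →
      ∀ (x : Var) (l : Loc),
        (tr.foldl ptStep (fun _ => (none : Option Loc))) x = some l → l ∈ pt x := by
  suffices h : ∀ tr : List (PtStmt Var Loc), (∀ st ∈ tr, st ∈ P) →
      ∀ σ : Var → Option Loc,
        (∀ x l, σ x = some l → l ∈ pt x) →
        ∀ x l, (tr.foldl ptStep σ) x = some l → l ∈ pt x by
    intro tr htr x l hx
    exact h tr htr _ (fun x l h => by simp at h) x l hx
  intro tr
  induction tr with
  | nil => intro _ σ hσ x l hx; exact hσ x l hx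
  | cons st ts ih =>
      intro htr σ hσ x l hx
      refine ih (fun s hs => htr s (List.mem_cons_of_mem _ hs)) _ ?_ x l hx
      have hst : st ∈ P := htr st List.mem_cons_self
      intro x l h
      cases st with
      | new y l' =>
          simp only [ptStep, Function.update] at h
          split at h
          · rename_i he; subst he; cases h; exact hnew _ _ hst
          · exact hσ x l h
      | copy y z =>
          simp only [ptStep, Function.update] at h
          split at h
          · rename_i he; subst he; exact hcopy _ _ hst (hσ _ _ h)
          · exact hσ x l h
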